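/- Let functions r : ℚ → ℕ with finite support correspond to Newton polygons. If P₁, P₂ are nonzero elements of the Ore ring D_q over K = ℂ((z)) (q not a root of unity) whose slope-μ characteristic equations satisfy the multiplicativity deg(char(P₁P₂, μ)) = deg(char(P₁, μ)) + deg(char(P₂, μ)) for every μ ∈ ℚ, and r_P(μ) equals the absolute degree of the characteristic equation of P at μ, then the Newton function is additive: r_{P₁P₂} = r_{P₁} + r_{P₂}; equivalently N(P₁P₂) = N(P₁) + N(P₂) (Minkowski sum of Newton polygons). -/

import Mathlib

open Pointwise

/-- Multiplication in the Ore ring `D_q = K⟨σ, σ⁻¹⟩` over `K = ℂ((z))`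
(relation `σ·a = σ(a)·σ`), elements being finitely supported coefficient families. -/
noncomputable def skewMul (σ : RingAut (LaurentSeries ℂ))
    (P Q : ℤ →₀ LaurentSeries ℂ) : ℤ →₀ LaurentSeries ℂ :=
  P.sum fun i a => Q.sum fun j b => Finsupp.single (i + j) (a * (σ ^ i) b)

/-- The Newton polygon of `P = Σ aᵢ σ^i`: the convex hull of
`{(i, j) : i ∈ supp P, j ≥ v₀(aᵢ)}` in `ℝ²`. -/
noncomputable def newtonPolygon (P : ℤ →₀ LaurentSeries ℂ) : Set (ℝ × ℝ) :=
  convexHull ℝ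
    {p : ℝ × ℝ | ∃ i ∈ P.support, ∃ j : ℤ, (P i).order ≤ j ∧ p = ((i : ℝ), (j : ℝ))}

lemma sigma_coeff_zero_iff {q : ℂ} (hq0 : q ≠ 0) (σ : RingAut (LaurentSeries ℂ))
    (hσ : ∀ (f : LaurentSeries ℂ) (k : ℤ), (σ f).coeff k = q ^ k * f.coeff k) :
    ∀ (n : ℤ) (f : LaurentSeries ℂ) (k : ℤ), ((σ ^ n) f).coeff k = 0 ↔ f.coeff k = 0 := by
  have hqk : ∀ k : ℤ, q ^ k ≠ 0 := fun k => zpow_ne_zero k hq0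
  have hbase : ∀ (f : LaurentSeries ℂ) (k : ℤ), (σ f).coeff k = 0 ↔ f.coeff k = 0 := by
    intro f k
    rw [hσ f k, mul_eq_zero]
    simp [hqk k]
  have hinv : ∀ (f : LaurentSeries ℂ) (k : ℤ), (σ⁻¹ f).coeff k = 0 ↔ f.coeff k = 0 := by
    intro f k
    have h1 : (σ (σ⁻¹ f)).coeff k = q ^ k * (σ⁻¹ f).coeff k := hσ _ k
    have h2 : σ (σ⁻¹ f) = f := by
      show (σ * σ⁻¹) f = f
      rw [mul_inv_cancel]; rfl
    rw [h2] at h1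
    rw [h1, mul_eq_zero]
    simp [hqk k]
  intro n
  induction n using Int.induction_on with
  | zero => intro f k; rw [zpow_zero]; rfl
  | succ i ih =>
    intro f k
    have h : (σ ^ ((i : ℤ) + 1)) f = (σ ^ (i : ℤ)) (σ f) := by
      rw [zpow_add_one]; rfl
    rw [h, ih (σ f) k, hbase]
  | pred i ih =>
    intro f k
    have h : (σ ^ (-(i : ℤ) - 1)) f = (σ ^ (-(i : ℤ))) (σ⁻¹ f) := by
      rw [zpow_sub_one]; rfl
    rw [h, ih (σ⁻¹ f) k, hinv]

lemma sigma_zero_iff {q : ℂ} (hq0 : q ≠ 0) (σ : RingAut (LaurentSeries ℂ))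
    (hσ : ∀ (f : LaurentSeries ℂ) (k : ℤ), (σ f).coeff k = q ^ k * f.coeff k)
    (n : ℤ) (f : LaurentSeries ℂ) : (σ ^ n) f = 0 ↔ f = 0 := by
  constructor
  · intro h
    apply (σ ^ n).injective
    rw [h, map_zero]
  · rintro rfl; exact map_zero _

lemma sigma_order_le {q : ℂ} (hq0 : q ≠ 0) (σ : RingAut (LaurentSeries ℂ))
    (hσ : ∀ (f : LaurentSeries ℂ) (k : ℤ), (σ f).coeff k = q ^ k * f.coeff k)
    (n : ℤ) (f : LaurentSeries ℂ) (hf : f ≠ 0) : ((σ ^ n) f).order ≤ f.order := by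
  apply HahnSeries.order_le_of_coeff_ne_zero
  intro h
  exact HahnSeries.coeff_order_eq_zero.not.2 hf ((sigma_coeff_zero_iff hq0 σ hσ n f _).mp h)

lemma sigma_order {q : ℂ} (hq0 : q ≠ 0) (σ : RingAut (LaurentSeries ℂ))
    (hσ : ∀ (f : LaurentSeries ℂ) (k : ℤ), (σ f).coeff k = q ^ k * f.coeff k)
    (n : ℤ) (f : LaurentSeries ℂ) (hf : f ≠ 0) : ((σ ^ n) f).order = f.order := by
  refine le_antisymm (sigma_order_le hq0 σ hσ n f hf) ?_
  have hinv : (σ ^ (-n)) ((σ ^ n) f) = f := by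
    show ((σ ^ (-n)) * (σ ^ n)) f = f
    rw [← zpow_add σ, neg_add_cancel, zpow_zero]; rfl
  have h2 : ((σ ^ n) f) ≠ 0 := by
    rw [Ne, sigma_zero_iff hq0 σ hσ]; exact hf
  calc f.order = ((σ ^ (-n)) ((σ ^ n) f)).order := by rw [hinv]
    _ ≤ ((σ ^ n) f).order := sigma_order_le hq0 σ hσ (-n) _ h2

lemma skewMul_apply (σ : RingAut (LaurentSeries ℂ)) (P Q : ℤ →₀ LaurentSeries ℂ) (k : ℤ) :
    skewMul σ P Q k
      = ∑ i ∈ P.support, (if k - i ∈ Q.support then P i * (σ ^ i) (Q (k - i)) else 0) := by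
  classical
  unfold skewMul
  rw [Finsupp.sum_apply]
  rw [Finsupp.sum]
  refine Finset.sum_congr rfl fun i _ => ?_
  rw [Finsupp.sum_apply, Finsupp.sum]
  have : ∀ j ∈ Q.support,
      (Finsupp.single (i + j) (P i * (σ ^ i) (Q j))) k
        = if j = k - i then P i * (σ ^ i) (Q j) else 0 := by
    intro j _
    rw [Finsupp.single_apply]
    exact if_congr (by omega) rfl rfl
  rw [Finset.sum_congr rfl this, Finset.sum_ite_eq' Q.support (k - i)]

lemma coeff_finset_sum {ι : Type*} (s : Finset ι) (F : ι → LaurentSeries ℂ) (m : ℤ) :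
    (∑ i ∈ s, F i).coeff m = ∑ i ∈ s, (F i).coeff m :=
  map_sum (HahnSeries.coeff.addMonoidHom m) F s

lemma order_lower {q : ℂ} (hq0 : q ≠ 0) (σ : RingAut (LaurentSeries ℂ))
    (hσ : ∀ (f : LaurentSeries ℂ) (k : ℤ), (σ f).coeff k = q ^ k * f.coeff k)
    (P₁ P₂ : ℤ →₀ LaurentSeries ℂ) (k : ℤ) (hk : skewMul σ P₁ P₂ k ≠ 0) :
    ∃ i ∈ P₁.support, k - i ∈ P₂.support ∧
      (P₁ i).order + (P₂ (k - i)).order ≤ (skewMul σ P₁ P₂ k).order := by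
  classical
  set m := (skewMul σ P₁ P₂ k).order with hm
  have hcoeff : (skewMul σ P₁ P₂ k).coeff m ≠ 0 := HahnSeries.coeff_order_eq_zero.not.2 hk
  rw [skewMul_apply, coeff_finset_sum] at hcoeff
  obtain ⟨i, hi, hne⟩ := Finset.exists_ne_zero_of_sum_ne_zero hcoeff
  refine ⟨i, hi, ?_⟩
  by_cases hmem : k - i ∈ P₂.support
  · rw [if_pos hmem] at hne
    refine ⟨hmem, ?_⟩
    have h1 : P₁ i ≠ 0 := Finsupp.mem_support_iff.mp hi
    have h2 : P₂ (k - i) ≠ 0 := Finsupp.mem_support_iff.mp hmem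
    have h2' : (σ ^ i) (P₂ (k - i)) ≠ 0 := by
      rw [Ne, sigma_zero_iff hq0 σ hσ]; exact h2
    have := HahnSeries.order_le_of_coeff_ne_zero hne
    rwa [HahnSeries.order_mul h1 h2', sigma_order hq0 σ hσ i _ h2] at this
  · rw [if_neg hmem] at hne
    simp at hne

lemma order_exact {q : ℂ} (hq0 : q ≠ 0) (σ : RingAut (LaurentSeries ℂ))
    (hσ : ∀ (f : LaurentSeries ℂ) (k : ℤ), (σ f).coeff k = q ^ k * f.coeff k)
    (P₁ P₂ : ℤ →₀ LaurentSeries ℂ) (k i : ℤ)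
    (hi : i ∈ P₁.support) (hj : k - i ∈ P₂.support)
    (hmin : ∀ i' ∈ P₁.support, k - i' ∈ P₂.support → i' ≠ i →
      (P₁ i).order + (P₂ (k - i)).order < (P₁ i').order + (P₂ (k - i')).order) :
    skewMul σ P₁ P₂ k ≠ 0 ∧
      (skewMul σ P₁ P₂ k).order = (P₁ i).order + (P₂ (k - i)).order := by
  classical
  set w := (P₁ i).order + (P₂ (k - i)).order with hwdef
  have horder : ∀ i' ∈ P₁.support, k - i' ∈ P₂.support →
      (P₁ i' * (σ ^ i') (P₂ (k - i'))).order = (P₁ i').order + (P₂ (k - i')).order ∧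
      P₁ i' * (σ ^ i') (P₂ (k - i')) ≠ 0 := by
    intro i' hi' hj'
    have h1 : P₁ i' ≠ 0 := Finsupp.mem_support_iff.mp hi'
    have h2 : P₂ (k - i') ≠ 0 := Finsupp.mem_support_iff.mp hj'
    have h2' : (σ ^ i') (P₂ (k - i')) ≠ 0 := by
      rw [Ne, sigma_zero_iff hq0 σ hσ]; exact h2
    exact ⟨by rw [HahnSeries.order_mul h1 h2', sigma_order hq0 σ hσ i' _ h2],
      mul_ne_zero h1 h2'⟩
  -- coefficient at w equals the single minimal term's coefficient
  have hcw : (skewMul σ P₁ P₂ k).coeff w = (P₁ i * (σ ^ i) (P₂ (k - i))).coeff w := by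
    rw [skewMul_apply, coeff_finset_sum]
    rw [Finset.sum_eq_single i]
    · rw [if_pos hj]
    · intro i' hi' hne
      by_cases hmem : k - i' ∈ P₂.support
      · rw [if_pos hmem]
        apply HahnSeries.coeff_eq_zero_of_lt_order
        rw [(horder i' hi' hmem).1]
        exact hmin i' hi' hmem hne
      · rw [if_neg hmem]; simp
    · intro h; exact absurd hi h
  have hterm : (P₁ i * (σ ^ i) (P₂ (k - i))).coeff w ≠ 0 := by
    have h := horder i hi hj
    rw [hwdef, ← h.1]
    exact HahnSeries.coeff_order_eq_zero.not.2 h.2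
  have hne : skewMul σ P₁ P₂ k ≠ 0 := by
    intro h
    rw [h] at hcw
    simp at hcw
    exact hterm hcw.symm
  refine ⟨hne, le_antisymm ?_ ?_⟩
  · apply HahnSeries.order_le_of_coeff_ne_zero
    rw [hcw]; exact hterm
  · -- all coefficients below w vanish
    by_contra hlt
    push_neg at hlt
    set o := (skewMul σ P₁ P₂ k).order with ho
    have hzero : (skewMul σ P₁ P₂ k).coeff o = 0 := by
      rw [skewMul_apply, coeff_finset_sum]
      apply Finset.sum_eq_zero
      intro i' hi'
      by_cases hmem : k - i' ∈ P₂.support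
      · rw [if_pos hmem]
        apply HahnSeries.coeff_eq_zero_of_lt_order
        rw [(horder i' hi' hmem).1]
        rcases eq_or_ne i' i with rfl | hne'
        · exact hlt
        · exact lt_trans hlt (hmin i' hi' hmem hne')
      · rw [if_neg hmem]; simp
    exact HahnSeries.coeff_order_eq_zero.not.2 hne hzero

lemma lower_hull_lemma (A B : Finset ℤ) (hA : A.Nonempty) (hB : B.Nonempty)
    (f g : ℤ → ℤ) (SS : Set (ℝ × ℝ)) (hconv : Convex ℝ SS)
    (hV : ∀ k i : ℤ, i ∈ A → k - i ∈ B →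
      (∀ i' ∈ A, k - i' ∈ B → i' ≠ i → f i + g (k - i) < f i' + g (k - i')) →
      ∀ y : ℤ, f i + g (k - i) ≤ y → (((k : ℝ)), ((y : ℝ))) ∈ SS) :
    ∀ i ∈ A, ∀ j ∈ B, ∀ m : ℤ, f i + g j ≤ m → (((i : ℝ) + (j : ℝ)), ((m : ℝ))) ∈ SS := by
  classical
  intro i₀ hi₀ j₀ hj₀ m hm
  set P : Finset (ℤ × ℤ) := A ×ˢ B with hP
  set w : ℤ × ℤ → ℤ := fun p => f p.1 + g p.2 with hw
  set pr : ℤ → Finset (ℤ × ℤ) := fun k => P.filter (fun p => p.1 + p.2 = k) with hpr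
  set CC : Finset ℤ := P.image (fun p => p.1 + p.2) with hCC
  have hpr_mem : ∀ (k : ℤ) (p : ℤ × ℤ), p ∈ pr k ↔ (p.1 ∈ A ∧ p.2 ∈ B ∧ p.1 + p.2 = k) := by
    intro k p
    simp [hpr, hP, Finset.mem_filter, Finset.mem_product, and_assoc]
  have hCC_mem : ∀ k : ℤ, k ∈ CC ↔ ∃ i ∈ A, ∃ j ∈ B, i + j = k := by
    intro k
    simp only [hCC, Finset.mem_image, hP, Finset.mem_product]
    constructor
    · rintro ⟨p, ⟨h1, h2⟩, h3⟩; exact ⟨p.1, h1, p.2, h2, h3⟩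
    · rintro ⟨i, hi, j, hj, hij⟩; exact ⟨(i, j), ⟨hi, hj⟩, hij⟩
  have hPne : P.Nonempty := hA.product hB
  have hCCne : CC.Nonempty := hPne.image _
  have hprCC : ∀ k ∈ CC, (pr k).Nonempty := by
    intro k hk
    obtain ⟨i, hi, j, hj, hij⟩ := (hCC_mem k).1 hk
    exact ⟨(i, j), (hpr_mem k (i, j)).2 ⟨hi, hj, hij⟩⟩
  set M : ℤ → ℤ := fun k => if h : (pr k).Nonempty then (pr k).inf' h w else 0 with hM
  have hMle : ∀ (k : ℤ), ∀ p ∈ pr k, M k ≤ w p := by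
    intro k p hp
    have hne : (pr k).Nonempty := ⟨p, hp⟩
    rw [hM]
    simp only [dif_pos hne]
    exact Finset.inf'_le w hp
  have hMattain : ∀ k ∈ CC, ∃ p ∈ pr k, M k = w p := by
    intro k hk
    have h := hprCC k hk
    rw [hM]
    simp only [dif_pos h]
    obtain ⟨p, hp, hval⟩ := Finset.exists_mem_eq_inf' h w
    exact ⟨p, hp, hval⟩
  set UMin : ℤ → Prop := fun k => ∃ p ∈ pr k, ∀ p' ∈ pr k, p' ≠ p → w p < w p' with hUM
  set xM : ℤ := CC.sup' hCCne M with hxM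
  set mM : ℤ := CC.inf' hCCne M with hmM
  have hmMxM : ∀ k ∈ CC, mM ≤ M k ∧ M k ≤ xM :=
    fun k hk => ⟨Finset.inf'_le _ hk, Finset.le_sup' _ hk⟩
  set H : ℤ := max (2 * xM - mM + 1) (m + 1) with hH
  have hMH : ∀ k ∈ CC, M k < H := by
    intro k hk
    have h1 := hmMxM k hk
    have h2 : 2 * xM - mM + 1 ≤ H := le_max_left _ _
    have h3 := hmMxM k hk
    omega
  have hmH : m < H := lt_of_lt_of_le (lt_add_one m) (le_max_right _ _)
  set Gf : Set (ℝ × ℝ) := (fun k : ℤ => ((k : ℝ), (M k : ℝ))) '' ↑CC ∪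
      (fun k : ℤ => ((k : ℝ), (H : ℝ))) '' ↑CC with hGf
  have hGfin : Gf.Finite := (CC.finite_toSet.image _).union (CC.finite_toSet.image _)
  set s : Set (ℝ × ℝ) := convexHull ℝ Gf with hs
  have hscomp : IsCompact s := hGfin.isCompact_convexHull ℝ
  have hsconv : Convex ℝ s := convex_convexHull ℝ Gf
  have hGfs : Gf ⊆ s := subset_convexHull ℝ Gf
  -- vertical segment membership
  have hvert : ∀ k ∈ CC, ∀ y : ℝ, (M k : ℝ) ≤ y → y ≤ (H : ℝ) → ((k : ℝ), y) ∈ s := by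
    intro k hk y h1 h2
    have hx1 : ((k : ℝ), (M k : ℝ)) ∈ s := hGfs (Or.inl ⟨k, hk, rfl⟩)
    have hx2 : ((k : ℝ), (H : ℝ)) ∈ s := hGfs (Or.inr ⟨k, hk, rfl⟩)
    have hMH' : (M k : ℝ) < H := by exact_mod_cast hMH k hk
    have hden : (0 : ℝ) < (H : ℝ) - M k := by linarith
    refine hsconv.segment_subset hx1 hx2 ?_
    refine ⟨((H : ℝ) - y) / ((H : ℝ) - M k), (y - M k) / ((H : ℝ) - M k),
      div_nonneg (by linarith) hden.le, div_nonneg (by linarith) hden.le, ?_, ?_⟩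
    · field_simp; ring
    · show (_ • ((k : ℝ), (M k : ℝ)) + _ • ((k : ℝ), (H : ℝ))) = ((k : ℝ), y)
      rw [Prod.smul_mk, Prod.smul_mk, Prod.mk_add_mk, Prod.mk.injEq]
      constructor
      · rw [smul_eq_mul, smul_eq_mul]; field_simp; ring
      · rw [smul_eq_mul, smul_eq_mul]; field_simp; ring
  -- kmin and kmax are uniquely attained
  have hUminmin : UMin (A.min' hA + B.min' hB) := by
    refine ⟨(A.min' hA, B.min' hB),
      (hpr_mem _ _).2 ⟨A.min'_mem hA, B.min'_mem hB, rfl⟩, ?_⟩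
    intro p' hp' hne
    exfalso
    apply hne
    obtain ⟨h1, h2, h3⟩ := (hpr_mem _ p').1 hp'
    have l1 := A.min'_le p'.1 h1
    have l2 := B.min'_le p'.2 h2
    have : p'.1 = A.min' hA := by omega
    have : p'.2 = B.min' hB := by omega
    exact Prod.ext (by omega) (by omega)
  have hUmaxmax : UMin (A.max' hA + B.max' hB) := by
    refine ⟨(A.max' hA, B.max' hB),
      (hpr_mem _ _).2 ⟨A.max'_mem hA, B.max'_mem hB, rfl⟩, ?_⟩
    intro p' hp' hne
    exfalso
    apply hne
    obtain ⟨h1, h2, h3⟩ := (hpr_mem _ p').1 hp'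
    have l1 := A.le_max' p'.1 h1
    have l2 := B.le_max' p'.2 h2
    exact Prod.ext (by omega) (by omega)
  -- classification of extreme points
  set F : Set (ℝ × ℝ) :=
    {p | ∃ k : ℤ, k ∈ CC ∧ UMin k ∧ (p = ((k : ℝ), (M k : ℝ)) ∨ p = ((k : ℝ), (H : ℝ)))} with hF
  have hEF : s.extremePoints ℝ ⊆ F := by
    intro e he
    have heGf : e ∈ Gf := extremePoints_convexHull_subset he
    obtain ⟨k, hk, rfl⟩ | ⟨k, hk, rfl⟩ := heGf
    -- case 1 : e = (k, M k)
    · by_cases hU : UMin k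
      · exact ⟨k, hk, hU, Or.inl rfl⟩
      exfalso
      obtain ⟨p, hp, hpM⟩ := hMattain k hk
      simp only [hUM] at hU
      push_neg at hU
      obtain ⟨p', hp', hpne, hple⟩ := hU p hp
      have hp'M : w p' = M k := le_antisymm (by omega) (hMle k p' hp')
      obtain ⟨ha1, hb1, hs1⟩ := (hpr_mem k p).1 hp
      obtain ⟨ha2, hb2, hs2⟩ := (hpr_mem k p').1 hp'
      have hifst : p.1 ≠ p'.1 := by
        intro h
        exact hpne (Prod.ext h.symm (by omega))
      have huCC : p.1 + p'.2 ∈ CC := (hCC_mem _).2 ⟨p.1, ha1, p'.2, hb2, rfl⟩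
      have hvCC : p'.1 + p.2 ∈ CC := (hCC_mem _).2 ⟨p'.1, ha2, p.2, hb1, rfl⟩
      have hMuv : M (p.1 + p'.2) + M (p'.1 + p.2) ≤ 2 * M k := by
        have l1 : M (p.1 + p'.2) ≤ w (p.1, p'.2) :=
          hMle _ _ ((hpr_mem _ _).2 ⟨ha1, hb2, rfl⟩)
        have l2 : M (p'.1 + p.2) ≤ w (p'.1, p.2) :=
          hMle _ _ ((hpr_mem _ _).2 ⟨ha2, hb1, rfl⟩)
        have hsum : w (p.1, p'.2) + w (p'.1, p.2) = w p + w p' := by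
          simp only [hw]; ring
        omega
      obtain ⟨k₁, k₂, hk₁CC, hk₂CC, hsum12, hMsum, hk₁k, hkk₂⟩ :
          ∃ k₁ k₂ : ℤ, k₁ ∈ CC ∧ k₂ ∈ CC ∧ k₁ + k₂ = 2 * k ∧
            M k₁ + M k₂ ≤ 2 * M k ∧ k₁ < k ∧ k < k₂ := by
        have hu : p.1 + p'.2 ≠ k := by omega
        rcases lt_or_gt_of_ne hu with h | h
        · exact ⟨p.1 + p'.2, p'.1 + p.2, huCC, hvCC, by omega, hMuv, h, by omega⟩
        · exact ⟨p'.1 + p.2, p.1 + p'.2, hvCC, huCC, by omega, by omega, by omega, h⟩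
      set d : ℝ := (M k : ℝ) - ((M k₁ : ℝ) + (M k₂ : ℝ)) / 2 with hd
      have hd0 : (0 : ℝ) ≤ d := by
        have : (M k₁ : ℝ) + (M k₂ : ℝ) ≤ 2 * (M k : ℝ) := by exact_mod_cast hMsum
        rw [hd]; linarith
      have hbound : ∀ ka kb : ℤ, ka ∈ CC → kb ∈ CC →
          (M ka : ℝ) + ((M k : ℝ) - ((M ka : ℝ) + (M kb : ℝ)) / 2) ≤ (H : ℝ) := by
        intro ka kb hka hkb
        have hZ : 2 * M k + M ka - M kb ≤ 2 * H := by
          have h1 := hmMxM k hk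
          have h2 := hmMxM ka hka
          have h3 := hmMxM kb hkb
          have h4 : 2 * xM - mM + 1 ≤ H := le_max_left _ _
          omega
        have hZ' : (2 * (M k : ℝ) + (M ka : ℝ) - (M kb : ℝ)) ≤ 2 * (H : ℝ) := by
          exact_mod_cast hZ
        linarith
      have hx₁s : ((k₁ : ℝ), (M k₁ : ℝ) + d) ∈ s := by
        apply hvert k₁ hk₁CC _ (by linarith)
        rw [hd]; exact hbound k₁ k₂ hk₁CC hk₂CC
      have hx₂s : ((k₂ : ℝ), (M k₂ : ℝ) + d) ∈ s := by
        apply hvert k₂ hk₂CC _ (by linarith)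
        have := hbound k₂ k₁ hk₂CC hk₁CC
        rw [hd]; linarith
      have hseg : ((k : ℝ), (M k : ℝ)) ∈
          openSegment ℝ ((k₁ : ℝ), (M k₁ : ℝ) + d) ((k₂ : ℝ), (M k₂ : ℝ) + d) := by
        refine ⟨1/2, 1/2, by norm_num, by norm_num, by norm_num, ?_⟩
        have hsum' : (k₁ : ℝ) + (k₂ : ℝ) = 2 * (k : ℝ) := by exact_mod_cast hsum12
        rw [Prod.smul_mk, Prod.smul_mk, Prod.mk_add_mk, Prod.mk.injEq]
        constructor
        · rw [smul_eq_mul, smul_eq_mul]; linarith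
        · rw [smul_eq_mul, smul_eq_mul, hd]; ring
      have heq := he.2 hx₁s hx₂s hseg
      have : (k₁ : ℝ) = (k : ℝ) := congrArg Prod.fst heq
      have : k₁ = k := by exact_mod_cast this
      omega
    -- case 2 : e = (k, H)
    · by_cases hU : UMin k
      · exact ⟨k, hk, hU, Or.inr rfl⟩
      exfalso
      set kmin := A.min' hA + B.min' hB with hkmin
      set kmax := A.max' hA + B.max' hB with hkmax
      have hkminCC : kmin ∈ CC := (hCC_mem _).2 ⟨_, A.min'_mem hA, _, B.min'_mem hB, rfl⟩
      have hkmaxCC : kmax ∈ CC := (hCC_mem _).2 ⟨_, A.max'_mem hA, _, B.max'_mem hB, rfl⟩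
      have hne1 : k ≠ kmin := fun h => hU (h ▸ hUminmin)
      have hne2 : k ≠ kmax := fun h => hU (h ▸ hUmaxmax)
      have hbounds : kmin ≤ k ∧ k ≤ kmax := by
        obtain ⟨i, hi, j, hj, hij⟩ := (hCC_mem k).1 hk
        have := A.min'_le i hi
        have := B.min'_le j hj
        have := A.le_max' i hi
        have := B.le_max' j hj
        omega
      have hlt1 : kmin < k := lt_of_le_of_ne hbounds.1 (Ne.symm hne1)
      have hlt2 : k < kmax := lt_of_le_of_ne hbounds.2 hne2
      have hx₁s : ((kmin : ℝ), (H : ℝ)) ∈ s := hGfs (Or.inr ⟨kmin, hkminCC, rfl⟩)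
      have hx₂s : ((kmax : ℝ), (H : ℝ)) ∈ s := hGfs (Or.inr ⟨kmax, hkmaxCC, rfl⟩)
      have hden : (0 : ℝ) < (kmax : ℝ) - (kmin : ℝ) := by
        have : kmin < kmax := lt_trans hlt1 hlt2
        exact_mod_cast sub_pos.mpr (show (kmin : ℝ) < kmax by exact_mod_cast this)
      have hseg : ((k : ℝ), (H : ℝ)) ∈
          openSegment ℝ ((kmin : ℝ), (H : ℝ)) ((kmax : ℝ), (H : ℝ)) := by
        refine ⟨((kmax : ℝ) - k) / ((kmax : ℝ) - kmin), ((k : ℝ) - kmin) / ((kmax : ℝ) - kmin),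
          div_pos (by exact_mod_cast sub_pos.mpr (show (k:ℝ) < kmax by exact_mod_cast hlt2)) hden,
          div_pos (by exact_mod_cast sub_pos.mpr (show (kmin:ℝ) < k by exact_mod_cast hlt1)) hden,
          by field_simp; ring, ?_⟩
        rw [Prod.smul_mk, Prod.smul_mk, Prod.mk_add_mk, Prod.mk.injEq]
        constructor
        · rw [smul_eq_mul, smul_eq_mul]; field_simp; ring
        · rw [smul_eq_mul, smul_eq_mul]; field_simp; ring
      have heq := he.2 hx₁s hx₂s hseg
      have : (kmin : ℝ) = (k : ℝ) := congrArg Prod.fst heq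
      have : kmin = k := by exact_mod_cast this
      omega
  -- s is contained in the convex hull of F
  have hFGf : F ⊆ Gf := by
    rintro p ⟨k, hk, _, h | h⟩
    · exact Or.inl ⟨k, hk, h.symm⟩
    · exact Or.inr ⟨k, hk, h.symm⟩
  have hFfin : F.Finite := hGfin.subset hFGf
  have hsF : s ⊆ convexHull ℝ F := by
    conv_lhs => rw [← closure_convexHull_extremePoints hscomp hsconv]
    exact closure_minimal (convexHull_mono hEF) (hFfin.isClosed_convexHull ℝ)
  -- F is contained in SS
  have hFSS : F ⊆ SS := by
    rintro p ⟨k, hk, ⟨pp, hpp, hminpp⟩, hcases⟩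
    obtain ⟨ha, hb, hsum⟩ := (hpr_mem k pp).1 hpp
    have hkpp : k - pp.1 = pp.2 := by omega
    have hstrict : ∀ i' ∈ A, k - i' ∈ B → i' ≠ pp.1 →
        f pp.1 + g (k - pp.1) < f i' + g (k - i') := by
      intro i' hi' hki' hne
      have hmem : (i', k - i') ∈ pr k := (hpr_mem k (i', k - i')).2 ⟨hi', hki', by ring⟩
      have hineq := hminpp (i', k - i') hmem
        (fun h => hne (congrArg Prod.fst h))
      simpa [hw, hkpp] using hineq
    have hMval : M k = f pp.1 + g (k - pp.1) := by
      have h1 : M k ≤ w pp := hMle k pp hpp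
      have h2 : w pp ≤ M k := by
        obtain ⟨p'', hp'', hval⟩ := hMattain k hk
        rcases eq_or_ne p'' pp with rfl | hnep
        · omega
        · have := hminpp p'' hp'' hnep
          omega
      have : M k = w pp := le_antisymm h1 h2
      rw [this, hw, hkpp]
    rcases hcases with rfl | rfl
    · have := hV k pp.1 ha (hkpp ▸ hb) hstrict (M k) (le_of_eq hMval.symm)
      exact this
    · exact hV k pp.1 ha (hkpp ▸ hb) hstrict H (by have := hMH k hk; omega)
  -- conclusion
  have hk₀CC : i₀ + j₀ ∈ CC := (hCC_mem _).2 ⟨i₀, hi₀, j₀, hj₀, rfl⟩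
  have hMk₀ : M (i₀ + j₀) ≤ m := by
    have := hMle (i₀ + j₀) (i₀, j₀) ((hpr_mem _ _).2 ⟨hi₀, hj₀, rfl⟩)
    simp only [hw] at this
    omega
  have hmem : (((i₀ + j₀ : ℤ) : ℝ), (m : ℝ)) ∈ s :=
    hvert _ hk₀CC _ (by exact_mod_cast hMk₀) (by exact_mod_cast hmH.le)
  have hfinal := convexHull_min hFSS hconv (hsF hmem)
  have hcast : ((i₀ + j₀ : ℤ) : ℝ) = (i₀ : ℝ) + (j₀ : ℝ) := by push_cast; ring
  rwa [hcast] at hfinal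

/-- Theorem 1.1.9 (additivity of the Newton polygon): over `K = ℂ((z))` with `q` not a
root of unity, if the degrees of the slope-`μ` characteristic equations are
multiplicative under the product `P₁P₂` for every `μ ∈ ℚ`, and the Newton function
`r_P(μ)` equals the absolute degree of the characteristic equation of `P` at `μ`, then
the Newton function is additive, `r_{P₁P₂} = r_{P₁} + r_{P₂}`; equivalently the Newton
polygons satisfy `N(P₁P₂) = N(P₁) + N(P₂)` (Minkowski sum). -/
theorem stmt_19 (q : ℂ) (hq0 : q ≠ 0) (hq : ∀ n : ℕ, 0 < n → q ^ n ≠ 1)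
    (σ : RingAut (LaurentSeries ℂ))
    (hσ : ∀ (f : LaurentSeries ℂ) (k : ℤ), (σ f).coeff k = q ^ k * f.coeff k)
    (P₁ P₂ : ℤ →₀ LaurentSeries ℂ) (h1 : P₁ ≠ 0) (h2 : P₂ ≠ 0)
    (r charDeg : (ℤ →₀ LaurentSeries ℂ) → ℚ → ℕ)
    (hmult : ∀ μ : ℚ, charDeg (skewMul σ P₁ P₂) μ = charDeg P₁ μ + charDeg P₂ μ)
    (hrdeg : ∀ (P : ℤ →₀ LaurentSeries ℂ) (μ : ℚ), r P μ = charDeg P μ) :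
    (∀ μ : ℚ, r (skewMul σ P₁ P₂) μ = r P₁ μ + r P₂ μ) ∧
    newtonPolygon (skewMul σ P₁ P₂) = newtonPolygon P₁ + newtonPolygon P₂ := by
  classical
  refine ⟨fun μ => by rw [hrdeg, hrdeg, hrdeg, hmult], ?_⟩
  apply Set.Subset.antisymm
  · -- easy inclusion
    rw [newtonPolygon, newtonPolygon, newtonPolygon, ← convexHull_add]
    apply convexHull_mono
    rintro p ⟨k, hk, mm, hmm, rfl⟩
    obtain ⟨i, hi, hmem, hord⟩ := order_lower hq0 σ hσ P₁ P₂ k (Finsupp.mem_support_iff.mp hk)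
    rw [Set.mem_add]
    refine ⟨((i : ℝ), ((P₁ i).order : ℝ)), ⟨i, hi, (P₁ i).order, le_refl _, rfl⟩,
      (((k - i : ℤ) : ℝ), ((mm - (P₁ i).order : ℤ) : ℝ)),
      ⟨k - i, hmem, mm - (P₁ i).order, by omega, rfl⟩, ?_⟩
    rw [Prod.mk_add_mk, Prod.mk.injEq]
    constructor <;> push_cast <;> ring
  · -- hard inclusion
    rw [newtonPolygon, newtonPolygon, newtonPolygon, ← convexHull_add]
    apply convexHull_min ?_ (convex_convexHull ℝ _)
    rintro p hp
    rw [Set.mem_add] at hp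
    obtain ⟨y, ⟨i, hi, m₁, hm₁, rfl⟩, z, ⟨j, hj, m₂, hm₂, rfl⟩, rfl⟩ := hp
    have h1' : P₁.support.Nonempty := Finsupp.support_nonempty_iff.mpr h1
    have h2' : P₂.support.Nonempty := Finsupp.support_nonempty_iff.mpr h2
    have key := lower_hull_lemma P₁.support P₂.support h1' h2'
      (fun i => (P₁ i).order) (fun j => (P₂ j).order)
      (convexHull ℝ {p : ℝ × ℝ | ∃ k ∈ (skewMul σ P₁ P₂).support, ∃ mm : ℤ,
        ((skewMul σ P₁ P₂) k).order ≤ mm ∧ p = ((k : ℝ), (mm : ℝ))})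
      (convex_convexHull ℝ _)
      (fun k i hiA hiB hstrict y hy => by
        obtain ⟨hne, hord⟩ := order_exact hq0 σ hσ P₁ P₂ k i hiA hiB hstrict
        exact subset_convexHull ℝ _
          ⟨k, Finsupp.mem_support_iff.mpr hne, y, by rw [hord]; exact hy, rfl⟩)
      i hi j hj (m₁ + m₂) (by show (P₁ i).order + (P₂ j).order ≤ m₁ + m₂; omega)
    have heq : ((i : ℝ), (m₁ : ℝ)) + ((j : ℝ), (m₂ : ℝ))
        = (((i : ℝ) + (j : ℝ)), ((m₁ + m₂ : ℤ) : ℝ)) := by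
      rw [Prod.mk_add_mk, Prod.mk.injEq]
      exact ⟨rfl, by push_cast; ring⟩
    rw [heq]
    exact key
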